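/- In a Grothendieck topos, let X be a decidable object and let i : Y ⟶ X be a monomorphism admitting a retraction r : X ⟶ Y (i.e. i ≫ r = 𝟙 Y). Then the subobject of X represented by i is complemented. -/

import Mathlib

/-!
Formalisation of a statement from "On the profinite fundamental group of a
connected Grothendieck topos" (Berger–Iwaniack).  A Grothendieck topos is
modelled as `Sheaf J (Type u)` for a small site `(C, J)`.
-/

open CategoryTheory CategoryTheory.Limits

universe u

instance {C : Type u} [SmallCategory C] (J : GrothendieckTopology C) :
    HasColimitsOfSize.{u, u} (Sheaf J (Type u)) :=
  Sheaf.instHasColimitsOfSize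

/-- A subobject `s` of `X` is complemented if it has a complement in the
subobject lattice of `X`. -/
def IsComplementedSub {C : Type u} [SmallCategory C] {J : GrothendieckTopology C}
    {X : Sheaf J (Type u)} (s : Subobject X) : Prop :=
  ∃ t : Subobject X, s ⊓ t = ⊥ ∧ s ⊔ t = ⊤

/-- An object is decidable if its diagonal, regarded as a subobject of `X ⨯ X`,
is complemented. -/
def IsDecidableObj {C : Type u} [SmallCategory C] {J : GrothendieckTopology C}
    (X : Sheaf J (Type u)) : Prop :=
  IsComplementedSub (Subobject.mk (diag X))

/-- An object is connected if it is not initial and its only complemented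
subobjects are `⊥` and `⊤`. -/
def IsConnectedObj {C : Type u} [SmallCategory C] {J : GrothendieckTopology C}
    (X : Sheaf J (Type u)) : Prop :=
  (¬ Nonempty (IsInitial X)) ∧
    ∀ s : Subobject X, IsComplementedSub s → s = ⊥ ∨ s = ⊤

/-- An object is locally connected if it is (isomorphic to) a coproduct of
connected objects. -/
def IsLocallyConnectedObj {C : Type u} [SmallCategory C] {J : GrothendieckTopology C}
    (X : Sheaf J (Type u)) : Prop :=
  ∃ (I : Type u) (Z : I → Sheaf J (Type u)),
    (∀ i, IsConnectedObj (Z i)) ∧ Nonempty (X ≅ ∐ Z)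

/-- An object is locally constant if it is trivialised, with constant fibres,
by some cover of the terminal object. -/
def IsLocallyConstantObj {C : Type u} [SmallCategory C] {J : GrothendieckTopology C}
    (X : Sheaf J (Type u)) : Prop :=
  ∃ (I : Type u) (U : I → Sheaf J (Type u)),
    Epi (terminal.from (∐ U)) ∧
    ∀ i, ∃ (S : Type u)
      (e : X ⨯ U i ≅ (constantSheaf J (Type u)).obj S ⨯ U i),
      e.hom ≫ Limits.prod.snd = Limits.prod.snd

/-- An object is locally finite if it is trivialised, with finite constant
fibres, by some cover of the terminal object. -/
def IsLocallyFiniteObj {C : Type u} [SmallCategory C] {J : GrothendieckTopology C}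
    (X : Sheaf J (Type u)) : Prop :=
  ∃ (I : Type u) (U : I → Sheaf J (Type u)),
    Epi (terminal.from (∐ U)) ∧
    ∀ i, ∃ (n : ℕ)
      (e : X ⨯ U i ≅ (constantSheaf J (Type u)).obj (ULift.{u} (Fin n)) ⨯ U i),
      e.hom ≫ Limits.prod.snd = Limits.prod.snd

/-- An object is finite if it is locally finite and a finite coproduct of
connected objects. -/
def IsFiniteObj {C : Type u} [SmallCategory C] {J : GrothendieckTopology C}
    (X : Sheaf J (Type u)) : Prop :=
  IsLocallyFiniteObj X ∧
    ∃ (n : ℕ) (Z : Fin n → Sheaf J (Type u)),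
      (∀ k, IsConnectedObj (Z k)) ∧ Nonempty (X ≅ ∐ Z)

/-- An object is a sum of finite objects if it is isomorphic to a coproduct of
finite objects. -/
def IsSumOfFiniteObj {C : Type u} [SmallCategory C] {J : GrothendieckTopology C}
    (X : Sheaf J (Type u)) : Prop :=
  ∃ (I : Type u) (Z : I → Sheaf J (Type u)),
    (∀ i, IsFiniteObj (Z i)) ∧ Nonempty (X ≅ ∐ Z)

/-- A Galois object: a connected, globally supported object `A` such that the
canonical morphism `∐_{g ∈ Aut A} A ⟶ A ⨯ A` is an isomorphism. -/
def IsGaloisObj {C : Type u} [SmallCategory C] {J : GrothendieckTopology C}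
    (A : Sheaf J (Type u)) : Prop :=
  IsConnectedObj A ∧ Epi (terminal.from A) ∧
    IsIso (Sigma.desc (f := fun _ : Aut A => A)
      (fun g => Limits.prod.lift (𝟙 A) g.hom))


section AuxiliaryLemmas

open Opposite

variable {C : Type u} [SmallCategory C] {J : GrothendieckTopology C}

/-- Epimorphisms of sheaves of types are stable under pullback. -/
lemma aux_epi_pullback_snd {V W Z : Sheaf J (Type u)} (f : V ⟶ Z) (g : W ⟶ Z) [Epi f] :
    Epi (pullback.snd f g) := by
  have hf : Sheaf.IsLocallySurjective f := by
    rw [Sheaf.isLocallySurjective_iff_epi]; infer_instance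
  have : Sheaf.IsLocallySurjective (pullback.snd f g) := by
    constructor
    intro U s
    refine J.superset_covering ?_
      (Presheaf.imageSieve_mem J f.hom (g.hom.app (op U) s))
    rintro V' h ⟨v, hv⟩
    let ev : Sheaf J (Type u) ⥤ Type u :=
      sheafToPresheaf J (Type u) ⋙ (evaluation Cᵒᵖ (Type u)).obj (op V')
    have hcond : ev.map f v = ev.map g (W.val.map h.op s) :=
      hv.trans (ConcreteCategory.congr_hom (g.hom.naturality h.op) s).symm
    let p0 : Types.PullbackObj (ev.map f) (ev.map g) := ⟨(v, W.val.map h.op s), hcond⟩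
    refine ⟨(PreservesPullback.iso ev f g).inv ((Types.pullbackIsoPullback _ _).inv p0), ?_⟩
    exact (ConcreteCategory.congr_hom (PreservesPullback.iso_inv_snd ev f g) _).trans
      (Types.pullbackIsoPullback_inv_snd_apply (ev.map f) (ev.map g) p0)
  infer_instance

/-- Pulling back preserves "intersection is bottom" in a Grothendieck topos. -/
lemma aux_inf_pullback_bot {Z W : Sheaf J (Type u)} (a b : Subobject Z)
    (hinf : a ⊓ b = ⊥) (g : W ⟶ Z) :
    Subobject.mk (pullback.snd a.arrow g) ⊓ Subobject.mk (pullback.snd b.arrow g) = ⊥ := by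
  refine le_antisymm ?_ bot_le
  set c := Subobject.mk (pullback.snd a.arrow g) ⊓ Subobject.mk (pullback.snd b.arrow g) with hc
  let qa : (c : Sheaf J (Type u)) ⟶ Limits.pullback a.arrow g :=
    Subobject.ofLE _ _ inf_le_left ≫ (Subobject.underlyingIso (pullback.snd a.arrow g)).hom
  let qb : (c : Sheaf J (Type u)) ⟶ Limits.pullback b.arrow g :=
    Subobject.ofLE _ _ inf_le_right ≫ (Subobject.underlyingIso (pullback.snd b.arrow g)).hom
  have hqa : qa ≫ pullback.snd a.arrow g = c.arrow := by
    simp [qa, Subobject.underlyingIso_hom_comp_eq_mk, Subobject.ofLE_arrow]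
  have hqb : qb ≫ pullback.snd b.arrow g = c.arrow := by
    simp [qb, Subobject.underlyingIso_hom_comp_eq_mk, Subobject.ofLE_arrow]
  have hfa : a.Factors (c.arrow ≫ g) := by
    rw [Subobject.factors_iff]
    refine ⟨qa ≫ pullback.fst a.arrow g, ?_⟩
    calc (qa ≫ pullback.fst a.arrow g) ≫ a.arrow
        = qa ≫ pullback.fst a.arrow g ≫ a.arrow := Category.assoc _ _ _
      _ = qa ≫ pullback.snd a.arrow g ≫ g := by rw [pullback.condition]
      _ = (qa ≫ pullback.snd a.arrow g) ≫ g := (Category.assoc _ _ _).symm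
      _ = c.arrow ≫ g := by rw [hqa]
  have hfb : b.Factors (c.arrow ≫ g) := by
    rw [Subobject.factors_iff]
    refine ⟨qb ≫ pullback.fst b.arrow g, ?_⟩
    calc (qb ≫ pullback.fst b.arrow g) ≫ b.arrow
        = qb ≫ pullback.fst b.arrow g ≫ b.arrow := Category.assoc _ _ _
      _ = qb ≫ pullback.snd b.arrow g ≫ g := by rw [pullback.condition]
      _ = (qb ≫ pullback.snd b.arrow g) ≫ g := (Category.assoc _ _ _).symm
      _ = c.arrow ≫ g := by rw [hqb]
  have hbot : (⊥ : Subobject Z).Factors (c.arrow ≫ g) := by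
    rw [← hinf, Subobject.inf_factors]; exact ⟨hfa, hfb⟩
  rw [Subobject.factors_iff] at hbot
  obtain ⟨k, -⟩ := hbot
  have : IsIso (k ≫ Subobject.botCoeIsoInitial.hom) := initialIsInitial.isIso_to _
  have hcinit : IsInitial (c : Sheaf J (Type u)) :=
    IsInitial.ofIso initialIsInitial (asIso (k ≫ Subobject.botCoeIsoInitial.hom)).symm
  exact Subobject.le_of_comm (hcinit.to _) (hcinit.hom_ext _ _)

/-- Pulling back preserves "union is top" in a Grothendieck topos. -/
lemma aux_sup_pullback_top {Z W : Sheaf J (Type u)} (a b : Subobject Z)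
    (hsup : a ⊔ b = ⊤) (g : W ⟶ Z) :
    Subobject.mk (pullback.snd a.arrow g) ⊔ Subobject.mk (pullback.snd b.arrow g) = ⊤ := by
  set csup := Subobject.mk (pullback.snd a.arrow g) ⊔ Subobject.mk (pullback.snd b.arrow g)
    with hcsup
  -- the coproduct of the two subobjects covers `Z`
  set m : ((a : Sheaf J (Type u)) ⨿ (b : Sheaf J (Type u))) ⟶ Z := coprod.desc a.arrow b.arrow
    with hm
  have hinlm : coprod.inl ≫ m = a.arrow := by rw [hm]; exact coprod.inl_desc _ _
  have hinrm : coprod.inr ≫ m = b.arrow := by rw [hm]; exact coprod.inr_desc _ _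
  have ha : a ≤ Subobject.mk (image.ι m) :=
    Subobject.le_mk_of_comm (coprod.inl ≫ factorThruImage m)
      (by rw [Category.assoc, image.fac, hinlm])
  have hb : b ≤ Subobject.mk (image.ι m) :=
    Subobject.le_mk_of_comm (coprod.inr ≫ factorThruImage m)
      (by rw [Category.assoc, image.fac, hinrm])
  have htop : Subobject.mk (image.ι m) = ⊤ :=
    le_antisymm le_top (by rw [← hsup]; exact sup_le ha hb)
  have hιiso : IsIso (image.ι m) := (Subobject.isIso_iff_mk_eq_top _).mpr htop
  have hmepi : Epi m := by
    rw [← image.fac m]; exact epi_comp _ _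
  -- pull everything back along `g`
  have hm'epi : Epi (pullback.snd m g) := aux_epi_pullback_snd m g
  -- the pulled-back cofan is a colimit, by extensivity
  have hvk := FinitaryExtensive.vanKampen
      (BinaryCofan.mk (coprod.inl : (a : Sheaf J (Type u)) ⟶ _)
        (coprod.inr : (b : Sheaf J (Type u)) ⟶ _)) (coprodIsCoprod _ _)
  obtain ⟨hcolim⟩ := hvk.isUniversal
    (BinaryCofan.mk (pullback.snd coprod.inl (pullback.fst m g))
      (pullback.snd coprod.inr (pullback.fst m g)))
    (mapPair (pullback.fst coprod.inl (pullback.fst m g))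
      (pullback.fst coprod.inr (pullback.fst m g)))
    (pullback.fst m g)
    (by
      apply NatTrans.ext
      funext j
      rcases j with ⟨_ | _⟩ <;> (dsimp; exact pullback.condition))
    (mapPair_equifibered _)
    (by
      rintro ⟨(_ | _)⟩
      · exact (IsPullback.of_hasPullback coprod.inl (pullback.fst m g)).flip
      · exact (IsPullback.of_hasPullback coprod.inr (pullback.fst m g)).flip)
  -- build the comparison map into the union
  have hua : pullback.fst coprod.inl (pullback.fst m g) ≫ a.arrow
      = pullback.snd coprod.inl (pullback.fst m g) ≫ pullback.snd m g ≫ g := by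
    rw [← hinlm, ← Category.assoc, pullback.condition, Category.assoc, pullback.condition]
  have hub : pullback.fst coprod.inr (pullback.fst m g) ≫ b.arrow
      = pullback.snd coprod.inr (pullback.fst m g) ≫ pullback.snd m g ≫ g := by
    rw [← hinrm, ← Category.assoc, pullback.condition, Category.assoc, pullback.condition]
  let uA : Limits.pullback coprod.inl (pullback.fst m g) ⟶ (csup : Sheaf J (Type u)) :=
    pullback.lift (pullback.fst coprod.inl (pullback.fst m g))
      (pullback.snd coprod.inl (pullback.fst m g) ≫ pullback.snd m g) hua ≫
      (Subobject.underlyingIso (pullback.snd a.arrow g)).inv ≫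
      Subobject.ofLE _ _ le_sup_left
  let uB : Limits.pullback coprod.inr (pullback.fst m g) ⟶ (csup : Sheaf J (Type u)) :=
    pullback.lift (pullback.fst coprod.inr (pullback.fst m g))
      (pullback.snd coprod.inr (pullback.fst m g) ≫ pullback.snd m g) hub ≫
      (Subobject.underlyingIso (pullback.snd b.arrow g)).inv ≫
      Subobject.ofLE _ _ le_sup_right
  have huA : uA ≫ csup.arrow
      = pullback.snd coprod.inl (pullback.fst m g) ≫ pullback.snd m g := by
    simp [uA, Subobject.ofLE_arrow, Subobject.underlyingIso_arrow]
    exact pullback.lift_snd _ _ _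
  have huB : uB ≫ csup.arrow
      = pullback.snd coprod.inr (pullback.fst m g) ≫ pullback.snd m g := by
    simp [uB, Subobject.ofLE_arrow, Subobject.underlyingIso_arrow]
    exact pullback.lift_snd _ _ _
  have hpsi : hcolim.desc (BinaryCofan.mk uA uB) ≫ csup.arrow = pullback.snd m g := by
    refine hcolim.hom_ext ?_
    rintro ⟨(_ | _)⟩
    · erw [← Category.assoc]
      erw [hcolim.fac (BinaryCofan.mk uA uB) ⟨WalkingPair.left⟩]
      exact huA
    · erw [← Category.assoc]
      erw [hcolim.fac (BinaryCofan.mk uA uB) ⟨WalkingPair.right⟩]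
      exact huB
  have : Epi csup.arrow := @epi_of_epi_fac _ _ _ _ _ _ _ _ hm'epi hpsi
  have : IsIso csup.arrow := isIso_of_mono_of_epi _
  exact Subobject.eq_top_of_isIso_arrow _

end AuxiliaryLemmas

/-- in a Grothendieck topos, any monomorphism admitting a
retraction into a decidable object is a complemented subobject. -/
theorem retract_of_decidable_isComplemented
    {C : Type u} [SmallCategory C] {J : GrothendieckTopology C}
    {X Y : Sheaf J (Type u)} (hX : IsDecidableObj X)
    (i : Y ⟶ X) [Mono i] (r : X ⟶ Y) (hr : i ≫ r = 𝟙 Y) :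
    IsComplementedSub (Subobject.mk i) := by
  obtain ⟨t, h1, h2⟩ := hX
  set φ : X ⟶ X ⨯ X := prod.lift (𝟙 X) (r ≫ i) with hφ
  set a : Subobject (X ⨯ X) := Subobject.mk (diag X) with ha
  have e_arr : (Subobject.underlyingIso (diag X)).hom ≫ diag X = a.arrow :=
    Subobject.underlyingIso_hom_comp_eq_mk _
  have afs : a.arrow ≫ prod.fst = a.arrow ≫ prod.snd := by
    rw [← e_arr]; simp
    rw [prod.lift_fst, prod.lift_snd]
  have hφf : φ ≫ prod.fst = 𝟙 X := by simp [hφ]; exact prod.lift_fst _ _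
  have hφs : φ ≫ prod.snd = r ≫ i := by simp [hφ]; exact prod.lift_snd _ _
  -- the pullback of the diagonal along φ is (the subobject of) Y
  have key : Subobject.mk (pullback.snd a.arrow φ) = Subobject.mk i := by
    apply le_antisymm
    · refine Subobject.mk_le_mk_of_comm (pullback.snd a.arrow φ ≫ r) ?_
      have c1 : pullback.fst a.arrow φ ≫ a.arrow ≫ prod.fst
          = pullback.snd a.arrow φ := by
        rw [← Category.assoc, pullback.condition, Category.assoc, hφf, Category.comp_id]
      have c2 : pullback.fst a.arrow φ ≫ a.arrow ≫ prod.snd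
          = pullback.snd a.arrow φ ≫ r ≫ i := by
        rw [← Category.assoc, pullback.condition, Category.assoc, hφs]
      rw [Category.assoc, ← c2, ← afs, c1]
    · refine Subobject.mk_le_mk_of_comm
        (pullback.lift (i ≫ (Subobject.underlyingIso (diag X)).inv) i ?_) ?_
      · rw [Category.assoc, Subobject.underlyingIso_arrow, hφ]
        simp [diag, prod.comp_lift, reassoc_of% hr]
      · exact pullback.lift_snd _ _ _
  have h1' := aux_inf_pullback_bot a t h1 φ
  have h2' := aux_sup_pullback_top a t h2 φ
  rw [key] at h1' h2'
  exact ⟨Subobject.mk (pullback.snd t.arrow φ), h1', h2'⟩
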